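/- Given the image function (Mf)(ε) := inf { f(x) : Mx = ε } for f: ℝⁿ → ℝ̄ and M ∈ ℝ^{m×n}, the proximal mapping of φ(μ) := (Mf)(μ + c) satisfies: prox_{γφ}(ζ) = M·argmin_w { f(w) + (1/(2γ))‖Mw − c − ζ‖² } − c, whenever the inner argmin exists and the infimum in the image function is attained. -/

import Mathlib

/-- For the image function `(Mf)(ε) = inf { f x | M x = ε }` and
`φ(μ) = (Mf)(μ + c)`, the proximal mapping satisfies
`prox_{γφ}(ζ) = M ⬝ argmin_w { f w + (1/(2γ))‖Mw - c - ζ‖² } - c`,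
whenever the inner argmin exists and the infimum in the image function
is attained. -/
theorem stmt_8 {m nn : ℕ} (f : EuclideanSpace ℝ (Fin nn) → EReal)
    (A : EuclideanSpace ℝ (Fin nn) →ₗ[ℝ] EuclideanSpace ℝ (Fin m))
    (c ζ : EuclideanSpace ℝ (Fin m)) (γ : ℝ) (hγ : 0 < γ)
    (φ : EuclideanSpace ℝ (Fin m) → EReal)
    (hφ : ∀ μ, φ μ = sInf (f '' {x | A x = μ + c}))
    -- the infimum defining the image function is attained:
    (hatt : ∀ x : EuclideanSpace ℝ (Fin nn), ∃ x', A x' = A x ∧ f x' = φ (A x - c))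
    (wstar : EuclideanSpace ℝ (Fin nn))
    -- the inner argmin exists (is attained at `wstar`):
    (hmin : IsMinOn (fun w => f w + ((1 / (2 * γ)) * ‖A w - c - ζ‖ ^ 2 : ℝ))
      Set.univ wstar) :
    IsMinOn (fun μ => φ μ + ((1 / (2 * γ)) * ‖μ - ζ‖ ^ 2 : ℝ)) Set.univ
      (A wstar - c) := by
  intro μ _
  simp only [Set.mem_setOf_eq]
  set t0 : ℝ := (1 / (2 * γ)) * ‖A wstar - c - ζ‖ ^ 2 with ht0
  set tμ : ℝ := (1 / (2 * γ)) * ‖μ - ζ‖ ^ 2 with htμ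
  -- Step 1: φ (A wstar - c) ≤ f wstar
  have h1 : φ (A wstar - c) ≤ f wstar := by
    rw [hφ]
    exact sInf_le ⟨wstar, by simp, rfl⟩
  -- Step 2: f wstar + t0 ≤ φ μ + tμ
  have h2 : f wstar + (t0 : EReal) ≤ φ μ + (tμ : EReal) := by
    rw [hφ]
    rcases Set.eq_empty_or_nonempty {x | A x = μ + c} with he | hne
    · rw [he]
      simp only [Set.image_empty, sInf_empty]
      rw [EReal.top_add_of_ne_bot (by simp)]
      exact le_top
    · have key : ∀ y ∈ f '' {x | A x = μ + c},
          f wstar + (t0 : EReal) - (tμ : EReal) ≤ y := by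
        rintro y ⟨x, hx, rfl⟩
        have hAx : A x - c - ζ = μ - ζ := by
          rw [hx]; abel
        have := hmin (Set.mem_univ x)
        simp only [Set.mem_setOf_eq, hAx] at this
        rw [EReal.sub_le_iff_le_add (Or.inl (EReal.coe_ne_bot tμ))
          (Or.inl (EReal.coe_ne_top tμ))]
        exact this
      have hle : f wstar + (t0 : EReal) - (tμ : EReal) ≤ sInf (f '' {x | A x = μ + c}) :=
        le_sInf key
      rwa [EReal.sub_le_iff_le_add (Or.inl (EReal.coe_ne_bot tμ))
        (Or.inl (EReal.coe_ne_top tμ))] at hle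
  calc φ (A wstar - c) + (t0 : EReal) ≤ f wstar + (t0 : EReal) :=
        add_le_add h1 le_rfl
    _ ≤ φ μ + (tμ : EReal) := h2
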